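/- Let d ≠ 0 and f ∈ ℝ. For each t ∈ (-1,1), setting â₁(t) = f(1-t²), â₂(t) = -f t √(1-t²), and ζ̂(t) = f²(1-t²) + t/√(1-t²), the pair (â₁(t), â₂(t)) is a constant solution of the stationary Lugiato-Lefever system with detuning parameter ζ = ζ̂(t). Conversely, every constant solution (a₁, a₂, ζ) ∈ ℝ³ of the system with forcing f arises in this way for some t ∈ (-1,1). -/

import Mathlib

open Real

theorem stmt_7 (d f : ℝ) (hd : d ≠ 0) :
    (∀ t ∈ Set.Ioo (-1 : ℝ) 1,
      let a1 := f * (1 - t ^ 2)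
      let a2 := -f * t * Real.sqrt (1 - t ^ 2)
      let ζ := f ^ 2 * (1 - t ^ 2) + t / Real.sqrt (1 - t ^ 2)
      a2 + ζ * a1 - (a1 ^ 2 + a2 ^ 2) * a1 = 0 ∧
      a1 - ζ * a2 + (a1 ^ 2 + a2 ^ 2) * a2 - f = 0) ∧
    (∀ a1 a2 ζ : ℝ,
      a2 + ζ * a1 - (a1 ^ 2 + a2 ^ 2) * a1 = 0 →
      a1 - ζ * a2 + (a1 ^ 2 + a2 ^ 2) * a2 - f = 0 →
      ∃ t ∈ Set.Ioo (-1 : ℝ) 1,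
        a1 = f * (1 - t ^ 2) ∧
        a2 = -f * t * Real.sqrt (1 - t ^ 2) ∧
        ζ = f ^ 2 * (1 - t ^ 2) + t / Real.sqrt (1 - t ^ 2)) := by
  constructor
  · intro t ht
    obtain ⟨ht1, ht2⟩ := ht
    have hpos : (0:ℝ) < 1 - t ^ 2 := by nlinarith
    set s := Real.sqrt (1 - t ^ 2) with hsdef
    have hs0 : 0 < s := Real.sqrt_pos.mpr hpos
    have hs : s ^ 2 = 1 - t ^ 2 := Real.sq_sqrt hpos.le
    have hsne : s ≠ 0 := ne_of_gt hs0
    constructor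
    · field_simp
      linear_combination ((-(f^3*t^2*(1-t^2)))*s - f*t) * hs
    · field_simp
      linear_combination ((-f^3*t^3)*(s^2 + (1-t^2)) + f^3*(1-t^2)*t - f^3*(1-t^2)^2*t - f^3*t^3*s*(1-s)) * hs
  · intro a1 a2 ζ h1 h2
    set μ := ζ - (a1 ^ 2 + a2 ^ 2) with hμ
    have ha2 : a2 = -μ * a1 := by linear_combination h1 + a1 * hμ
    have ha1 : a1 * (1 + μ ^ 2) = f := by linear_combination h2 + μ * ha2 - a2 * hμ
    have hS2pos : (0:ℝ) < 1 + μ ^ 2 := by positivity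
    set S := Real.sqrt (1 + μ ^ 2) with hSdef
    have hS0 : 0 < S := Real.sqrt_pos.mpr hS2pos
    have hS : S ^ 2 = 1 + μ ^ 2 := Real.sq_sqrt hS2pos.le
    have hSne : S ≠ 0 := ne_of_gt hS0
    have h1t : 1 - (μ / S) ^ 2 = 1 / S ^ 2 := by
      field_simp
      linarith [hS]
    have hsq : Real.sqrt (1 - (μ / S) ^ 2) = 1 / S := by
      rw [h1t, one_div, Real.sqrt_inv, Real.sqrt_sq hS0.le, one_div]
    refine ⟨μ / S, ⟨?_, ?_⟩, ?_, ?_, ?_⟩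
    · rw [neg_lt, ← neg_div, div_lt_one hS0]
      nlinarith [neg_le_abs μ, sq_abs μ, abs_nonneg μ]
    · rw [div_lt_one hS0]
      nlinarith [le_abs_self μ, sq_abs μ, abs_nonneg μ]
    · rw [h1t]
      field_simp
      linear_combination ha1 + a1 * hS
    · rw [hsq]
      field_simp
      linear_combination a2 * hS + (1 + μ^2) * ha2 - μ * ha1
    · rw [hsq, h1t]
      field_simp
      linear_combination (a1^2+a2^2)*hS + (a2 - μ*a1)*(1+μ^2)*ha2 + (a1*(1+μ^2)+f)*ha1
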